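/- Let $H=(V,E)$ be an $r$-uniform hypergraph on $n$ vertices with $\delta_{r-1}(H) \ge n/k$ where $k = (r-1)t+1$ and $t \ge 2$. Let $M \subseteq E$ be a $t$-shallow edge set such that every edge of $M$ contains at most one vertex of $M$-degree at least $2$, minimizing the number $n_0(M)$ of uncovered vertices among all such sets. If $n_0(M) > 0$, then the number of vertices of $M$-degree exactly $t$ is strictly less than $\lceil n/k \rceil$. -/

import Mathlib

open Finset

/-- Claim 1 of Theorem 4.4: if `H` is `r`-uniform on `n` vertices with
`δ_{r-1}(H) ≥ n/k` where `k = (r-1)t+1`, and `M ⊆ E` is a `t`-shallow edge set such that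
every edge of `M` contains at most one vertex of `M`-degree `≥ 2`, minimizing the number
of uncovered vertices among all such sets, then `n₀(M) > 0` implies that the number of
vertices of `M`-degree exactly `t` is less than `⌈n/k⌉`. -/
theorem degree_t_vertices_lt_ceil
    {V : Type*} [Fintype V] [DecidableEq V] (r t k : ℕ) (hr : 2 ≤ r) (ht : 2 ≤ t)
    (hk : k = (r-1)*t+1)
    (E : Finset (Finset V)) (hunif : ∀ e ∈ E, e.card = r)
    (hdeg : ∀ s : Finset V, s.card = r - 1 →
      (Fintype.card V : ℚ) / k ≤ ((Finset.univ.filter fun v => insert v s ∈ E).card : ℚ))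
    (M : Finset (Finset V)) (hM : M ⊆ E)
    (hshallow : ∀ v : V, (M.filter fun e => v ∈ e).card ≤ t)
    (hstruct : ∀ e ∈ M,
      (e.filter fun v => 2 ≤ (M.filter fun e' => v ∈ e').card).card ≤ 1)
    (hmin : ∀ M' ⊆ E, (∀ v : V, (M'.filter fun e => v ∈ e).card ≤ t) →
      (∀ e ∈ M', (e.filter fun v => 2 ≤ (M'.filter fun e' => v ∈ e').card).card ≤ 1) →
      (Finset.univ.filter fun v : V => (M.filter fun e => v ∈ e).card = 0).card ≤
        (Finset.univ.filter fun v : V => (M'.filter fun e => v ∈ e).card = 0).card)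
    (hn0 : 0 < (Finset.univ.filter fun v : V => (M.filter fun e => v ∈ e).card = 0).card) :
    ((Finset.univ.filter fun v : V => (M.filter fun e => v ∈ e).card = t).card : ℤ)
      < ⌈(Fintype.card V : ℚ) / k⌉ := by
  classical
  set deg : V → ℕ := fun v => (M.filter fun e => v ∈ e).card with hdegdef
  -- structural key: in an edge of M containing a vertex of degree ≥ 2, all other vertices have degree ≤ 1
  have key : ∀ e ∈ M, ∀ v ∈ e, ∀ w ∈ e, v ≠ w → 2 ≤ deg v → deg w ≤ 1 := by
    intro e he v hv w hw hvw h2v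
    by_contra h
    push_neg at h
    have h1 : 1 < (e.filter fun u => 2 ≤ (M.filter fun e' => u ∈ e').card).card := by
      apply Finset.one_lt_card.mpr
      refine ⟨v, ?_, w, ?_, hvw⟩
      · simp only [mem_filter]; exact ⟨hv, h2v⟩
      · simp only [mem_filter]; exact ⟨hw, h⟩
    exact absurd (hstruct e he) (by omega)
  set T : Finset V := Finset.univ.filter fun v => deg v = t with hT
  set N0 : Finset V := Finset.univ.filter fun v => deg v = 0 with hN0
  set W : V → Finset V := fun v => (M.filter fun e => v ∈ e).biUnion fun e => e.erase v with hW
  -- every element of W v (for v ∈ T) has degree 1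
  have hW1 : ∀ v ∈ T, ∀ w ∈ W v, deg w = 1 := by
    intro v hv w hw
    simp only [hW, mem_biUnion, mem_filter] at hw
    obtain ⟨e, ⟨heM, hve⟩, hwe⟩ := hw
    have hwne : w ≠ v := (Finset.mem_erase.mp hwe).1
    have hwe' : w ∈ e := (Finset.mem_erase.mp hwe).2
    have h2v : 2 ≤ deg v := by
      have := (mem_filter.mp hv).2; omega
    have hle := key e heM v hve w hwe' hwne.symm h2v
    have hge : 1 ≤ deg w := by
      have : e ∈ M.filter fun e' => w ∈ e' := mem_filter.mpr ⟨heM, hwe'⟩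
      exact Finset.card_pos.mpr ⟨e, this⟩
    omega
  -- card of W v
  have hWcard : ∀ v ∈ T, (W v).card = (r-1)*t := by
    intro v hv
    have hdv : deg v = t := (mem_filter.mp hv).2
    have h2v : 2 ≤ deg v := by omega
    rw [hW]
    rw [Finset.card_biUnion]
    · have : ∀ e ∈ M.filter fun e => v ∈ e, (e.erase v).card = r - 1 := by
        intro e he
        obtain ⟨heM, hve⟩ := mem_filter.mp he
        rw [Finset.card_erase_of_mem hve, hunif e (hM heM)]
      have hdv' : (M.filter fun e => v ∈ e).card = t := hdv
      rw [Finset.sum_congr rfl this, Finset.sum_const, hdv', smul_eq_mul, mul_comm]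
    · intro e he e' he' hne
      obtain ⟨heM, hve⟩ := mem_filter.mp he
      obtain ⟨heM', hve'⟩ := mem_filter.mp he'
      rw [Function.onFun, Finset.disjoint_left]
      intro w hw hw'
      have hwne : w ≠ v := (Finset.mem_erase.mp hw).1
      have hw1 : w ∈ e := (Finset.mem_erase.mp hw).2
      have hw2 : w ∈ e' := (Finset.mem_erase.mp hw').2
      have h2w : 2 ≤ deg w := by
        apply Finset.one_lt_card.mpr
        exact ⟨e, mem_filter.mpr ⟨heM, hw1⟩, e', mem_filter.mpr ⟨heM', hw2⟩, hne⟩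
      have := key e heM v hve w hw1 hwne.symm h2v
      omega
  -- W v's are pairwise disjoint over T
  have hWdisj : ∀ v ∈ T, ∀ v' ∈ T, v ≠ v' → Disjoint (W v) (W v') := by
    intro v hv v' hv' hne
    rw [Finset.disjoint_left]
    intro w hw hw'
    simp only [hW, mem_biUnion, mem_filter] at hw hw'
    obtain ⟨e, ⟨heM, hve⟩, hwe⟩ := hw
    obtain ⟨e', ⟨heM', hve'⟩, hwe'⟩ := hw'
    have hdw : deg w = 1 := hW1 v hv w (by simp only [hW, mem_biUnion, mem_filter]; exact ⟨e, ⟨heM, hve⟩, hwe⟩)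
    have hee' : e = e' := by
      have h1 : e ∈ M.filter fun e'' => w ∈ e'' := mem_filter.mpr ⟨heM, (Finset.mem_erase.mp hwe).2⟩
      have h2 : e' ∈ M.filter fun e'' => w ∈ e'' := mem_filter.mpr ⟨heM', (Finset.mem_erase.mp hwe').2⟩
      by_contra hc
      have : 1 < deg w := Finset.one_lt_card.mpr ⟨e, h1, e', h2, hc⟩
      omega
    subst hee'
    have h2v : 2 ≤ deg v := by have := (mem_filter.mp hv).2; omega
    have h2v' : 2 ≤ deg v' := by have := (mem_filter.mp hv').2; omega
    have := key e heM v hve v' hve' hne h2v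
    omega
  set U : Finset V := T.biUnion W with hU
  have hUcard : U.card = T.card * ((r-1)*t) := by
    rw [hU, Finset.card_biUnion hWdisj, Finset.sum_congr rfl hWcard, Finset.sum_const, smul_eq_mul]
  -- pairwise disjointness of N0, T, U
  have hUdeg : ∀ w ∈ U, deg w = 1 := by
    intro w hw
    obtain ⟨v, hv, hwv⟩ := mem_biUnion.mp hw
    exact hW1 v hv w hwv
  have d1 : Disjoint N0 T := by
    rw [Finset.disjoint_left]; intro a ha ha'
    have := (mem_filter.mp ha).2; have := (mem_filter.mp ha').2; omega
  have d2 : Disjoint (N0 ∪ T) U := by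
    rw [Finset.disjoint_left]; intro a ha ha'
    have h1 := hUdeg a ha'
    rcases Finset.mem_union.mp ha with h | h
    · have := (mem_filter.mp h).2; omega
    · have := (mem_filter.mp h).2; omega
  have hsum : N0.card + T.card + U.card ≤ Fintype.card V := by
    have := Finset.card_le_univ (N0 ∪ T ∪ U)
    rwa [Finset.card_union_of_disjoint d2, Finset.card_union_of_disjoint d1] at this
  -- conclude
  have hn0' : 1 ≤ N0.card := hn0
  have hkey : T.card * k < Fintype.card V := by
    rw [hk]; rw [hUcard] at hsum; nlinarith
  have hkpos : (0:ℚ) < (k:ℚ) := by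
    have : 0 < k := by omega
    exact_mod_cast this
  rw [Int.lt_ceil]
  rw [lt_div_iff₀ hkpos]
  calc ((T.card : ℤ) : ℚ) * k = ((T.card * k : ℕ) : ℚ) := by push_cast; ring
    _ < (Fintype.card V : ℚ) := by exact_mod_cast hkey
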